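/- Let S be an LR tableau in LR^{λ'}_{δ'μ'} (companion form) with first-row entries s_1 ≤ ⋯ ≤ s_p where p = μ'_1, λ ∈ 𝒫_n, δ ∈ 𝒫^{(2)}_n. Then δ^rev_i < s_i for all 1 ≤ i ≤ p; consequently the sequence m_1 < ⋯ < m_p of Definition 'bounded orthogonal LR' is well defined and satisfies i ≤ m_i ≤ 2i - 1 for 1 ≤ i ≤ p (in the case n - 2μ'_1 ≥ 0). -/

import Mathlib

namespace LRPaper

/-- A partition, encoded as a weakly decreasing list of positive integers. -/
def IsPartition (l : List ℕ) : Prop := l.Pairwise (· ≥ ·) ∧ ∀ x ∈ l, 0 < x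

/-- The conjugate (transposed) partition, as a list. -/
def conj (l : List ℕ) : List ℕ :=
  (List.range l.headI).map fun i => l.countP fun x => decide (i < x)

/-- The entry of a skew tableau `T` (list of rows, row `i` having the cells
`mu_i ≤ j < lam_i`) in row `i` and (absolute) column `j`. -/
def entry (mu : List ℕ) (T : List (List ℕ)) (i j : ℕ) : ℕ :=
  (T.getD i []).getD (j - mu.getD i 0) 0

/-- `T` is a semistandard tableau of skew shape `lam/mu` (entries are positive
integers, rows weakly increase, columns strictly increase). -/
def IsSkewSSYT (lam mu : List ℕ) (T : List (List ℕ)) : Prop :=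
  T.length = lam.length ∧
  (∀ i, (T.getD i []).length = lam.getD i 0 - mu.getD i 0) ∧
  (∀ r ∈ T, ∀ x ∈ r, 0 < x) ∧
  (∀ r ∈ T, r.Pairwise (· ≤ ·)) ∧
  (∀ i j, mu.getD i 0 ≤ j → mu.getD (i+1) 0 ≤ j → j < lam.getD (i+1) 0 →
    entry mu T i j < entry mu T (i+1) j)

/-- The number of occurrences of `k` among the entries of `T`. -/
def content (T : List (List ℕ)) (k : ℕ) : ℕ := T.flatten.count k

/-- `T` has content `nu` : the letter `k+1` occurs `nu_{k+1}` times. -/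
def HasContent (nu : List ℕ) (T : List (List ℕ)) : Prop :=
  ∀ k, content T (k+1) = nu.getD k 0

/-- The reverse reading word: each row right-to-left, rows top-to-bottom. -/
def rwordRev (T : List (List ℕ)) : List ℕ := (T.map List.reverse).flatten

/-- The column reading word `w(T)` : columns right-to-left, and from top to
bottom within each column. -/
def colWord (lam mu : List ℕ) (T : List (List ℕ)) : List ℕ :=
  ((List.range lam.headI).reverse.map fun c =>
    (List.range T.length).filterMap fun i =>
      if mu.getD i 0 ≤ c ∧ c < lam.getD i 0 then some (entry mu T i c) else none).flatten

/-- A lattice word: in every prefix, `i` occurs at least as often as `i+1`. -/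
def IsLattice (w : List ℕ) : Prop :=
  ∀ k i, (w.take k).count (i+2) ≤ (w.take k).count (i+1)

/-- An anti-lattice word (for letters bounded by `ℓ`): in every suffix, `i`
occurs at least as often as `i-1`, for `1 < i ≤ ℓ`. -/
def IsAntiLattice (w : List ℕ) (ℓ : ℕ) : Prop :=
  ∀ k i, i + 2 ≤ ℓ → (w.drop k).count (i+1) ≤ (w.drop k).count (i+2)

/-- A Littlewood–Richardson tableau of shape `lam/mu` and content `nu`. -/
def IsLR (lam mu nu : List ℕ) (T : List (List ℕ)) : Prop :=
  IsSkewSSYT lam mu T ∧ HasContent nu T ∧ IsLattice (rwordRev T)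

/-- A Littlewood–Richardson tableau of shape `lam/mu` with content `nu^π`
(the 180° rotation of `nu`): the column reading word is an anti-lattice word
and the letter `i` occurs `nu_{ℓ(nu)+1-i}` times. -/
def IsAntiLR (lam mu nu : List ℕ) (T : List (List ℕ)) : Prop :=
  IsSkewSSYT lam mu T ∧ HasContent nu.reverse T ∧
    IsAntiLattice (colWord lam mu T) nu.length

/-- Column insertion of `x` into a single column (top-to-bottom list): `x`
replaces the topmost entry `≥ x` (which is bumped to the next column), or is
appended at the bottom. -/
def colInsertCol (x : ℕ) : List ℕ → List ℕ × Option ℕ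
  | [] => ([x], none)
  | y :: ys =>
    if x ≤ y then (x :: ys, some y)
    else
      let p := colInsertCol x ys
      (y :: p.1, p.2)

/-- Column insertion of a letter into a tableau presented as its list of
columns (left to right). -/
def colInsert (x : ℕ) : List (List ℕ) → List (List ℕ)
  | [] => [[x]]
  | C :: rest =>
    match colInsertCol x C with
    | (C', none) => C' :: rest
    | (C', some y) => C' :: colInsert y rest

/-- Column insertion of a word (left to right) into a tableau given by its
columns. -/
def insertWord (w : List ℕ) (C : List (List ℕ)) : List (List ℕ) :=
  w.foldl (fun acc x => colInsert x acc) C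

/-- The columns of the superstandard tableau `H_mu` of shape `mu`: the `i`-th
entry from the top of each column is `i`. -/
def Hcols (mu : List ℕ) : List (List ℕ) :=
  (List.range mu.headI).map fun c => (List.range ((conj mu).getD c 0)).map (· + 1)

/-- The outer shape of the rotated diagram `mu^π` (a rectangle of width `mu_1`). -/
def piOuter (mu : List ℕ) : List ℕ := List.replicate mu.length mu.headI

/-- The inner shape of the rotated diagram `mu^π`. -/
def piInner (mu : List ℕ) : List ℕ :=
  (List.range mu.length).map fun i => mu.headI - mu.getD (mu.length - 1 - i) 0

/-- `S` is (the companion tableau of) an LR tableau in `LR^{lam'}_{delta' mu'}`: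
a semistandard tableau of straight shape `mu'` whose column insertion into
`H_{delta'}` yields `H_{lam'}`. -/
def IsCompanion (lam delta mu : List ℕ) (S : List (List ℕ)) : Prop :=
  IsSkewSSYT (conj mu) [] S ∧
    insertWord (colWord (conj mu) [] S) (Hcols (conj delta)) = Hcols (conj lam)

/-- `U` is (the companion tableau of) an LR tableau in `LR^{lam}_{delta mu^π}`:
a semistandard tableau of shape `mu^π` whose column insertion into `H_delta`
yields `H_lam`. -/
def IsCompanionAnti (lam delta mu : List ℕ) (U : List (List ℕ)) : Prop :=
  IsSkewSSYT (piOuter mu) (piInner mu) U ∧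
    insertWord (colWord (piOuter mu) (piInner mu) U) (Hcols delta) = Hcols lam


open scoped Classical

/-- `δ^{rev}`: the partition `δ`, padded with zeros to length `n`, read in
reverse. -/
def drev (n : ℕ) (delta : List ℕ) : List ℕ :=
  (delta ++ List.replicate (n - delta.length) 0).reverse

/-- The sequence of Definition 4.1, built downwards from `i = p = μ'_1`:
`m_i` is the largest index `k` with `i ≤ k ≤ ub(i)`, `k` not already chosen
among `m_{i+1}, …, m_p`, and `δ^{rev}_k < s_i`, where `s_i` is the `i`-th
entry of the first row of `S` and `ub(i) = 2i - 1` for `i ≤ r` and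
`n - p + i` for `i > r` (with `r = μ'_1` if `n - 2μ'_1 ≥ 0` and
`r = n - μ'_1` otherwise, i.e. `r = min(p, n-p)`).
`mChosen n mu delta S j = [m_{p-j+1}, …, m_p]`. -/
def mChosen (n : ℕ) (mu delta : List ℕ) (S : List (List ℕ)) : ℕ → List ℕ
  | 0 => []
  | j + 1 =>
    let p := mu.length
    let i := p - j
    let prev := mChosen n mu delta S j
    let ub := if i ≤ min p (n - p) then 2 * i - 1 else n - p + i
    Nat.findGreatest
      (fun k => i ≤ k ∧ k ∉ prev ∧
        (drev n delta).getD (k - 1) 0 < (S.getD 0 []).getD (i - 1) 0) ub :: prev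

/-- `m_i` of Definition 4.1, for `1 ≤ i ≤ p = μ'_1`. -/
def mOv (n : ℕ) (mu delta : List ℕ) (S : List (List ℕ)) (i : ℕ) : ℕ :=
  (mChosen n mu delta S (mu.length + 1 - i)).headI

/-- `n_j` of Definition 4.1: the `j`-th smallest element of
`{j+1, …, n} \ {m_{j+1}, …, m_p}`. -/
noncomputable def nOv (n : ℕ) (mu delta : List ℕ) (S : List (List ℕ)) (j : ℕ) : ℕ :=
  (((Finset.Icc (j + 1) n).filter fun k =>
      ∀ i ∈ Finset.Icc (j + 1) mu.length, mOv n mu delta S i ≠ k).sort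
    (· ≤ ·)).getD (j - 1) 0

/-- `S ∈ overline{LR}^{λ'}_{δ'μ'}` (Definition 4.1): a companion LR tableau
of shape `μ'` (so `(S → H_{δ'}) = H_{λ'}`) whose second-row entries
`t_1 ≤ ⋯ ≤ t_q` (`q = μ'_2`) satisfy `t_j > δ^{rev}_{n_j}`. -/
def InOvLR (n : ℕ) (lam delta mu : List ℕ) (S : List (List ℕ)) : Prop :=
  IsCompanion lam delta mu S ∧
  ∀ j, 1 ≤ j → j ≤ (conj mu).getD 1 0 →
    (drev n delta).getD (nOv n mu delta S j - 1) 0 <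
      (S.getD 1 []).getD (j - 1) 0

/-- `σ_i`: the `i`-th entry from the bottom of the rightmost column of a
tableau `U` of shape `μ^π`. -/
def sigmaEnt (mu : List ℕ) (U : List (List ℕ)) (i : ℕ) : ℕ :=
  entry (piInner mu) U (mu.length - i) (mu.headI - 1)

/-- `τ_j`: the `j`-th entry from the bottom of the second rightmost column of
a tableau `U` of shape `μ^π`. -/
def tauEnt (mu : List ℕ) (U : List (List ℕ)) (j : ℕ) : ℕ :=
  entry (piInner mu) U (mu.length - j) (mu.headI - 2)

/-- `m_i` of Definition 4.5: `min(n - σ_i + 1, 2i - 1)` for `i ≤ r` and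
`min(n - σ_i + 1, n - p + i)` for `i > r` (`r = min(p, n - p)`). -/
def mUnd (n : ℕ) (mu : List ℕ) (U : List (List ℕ)) (i : ℕ) : ℕ :=
  if i ≤ min mu.length (n - mu.length) then
    min (n - sigmaEnt mu U i + 1) (2 * i - 1)
  else
    min (n - sigmaEnt mu U i + 1) (n - mu.length + i)

/-- `n_j` of Definition 4.5: the `j`-th smallest element of
`{j+1, …, n} \ {m_{j+1}, …, m_p}`. -/
noncomputable def nUnd (n : ℕ) (mu : List ℕ) (U : List (List ℕ)) (j : ℕ) : ℕ :=
  (((Finset.Icc (j + 1) n).filter fun k =>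
      ∀ i ∈ Finset.Icc (j + 1) mu.length, mUnd n mu U i ≠ k).sort
    (· ≤ ·)).getD (j - 1) 0

/-- `U ∈ underline{LR}^{λ}_{δμ}` (Definition 4.5): a companion tableau of
shape `μ^π` (so `(U → H_δ) = H_λ`) satisfying the flag condition
`τ_j + n_j ≤ n + 1` for `1 ≤ j ≤ q = μ'_2`. -/
def InUndLR (n : ℕ) (lam delta mu : List ℕ) (U : List (List ℕ)) : Prop :=
  IsCompanionAnti lam delta mu U ∧
  ∀ j, 1 ≤ j → j ≤ (conj mu).getD 1 0 →
    tauEnt mu U j + nUnd n mu U j ≤ n + 1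


/-! ### Auxiliary development -/

/-- prefix-segment length counter -/
def aCA : ℕ → List ℕ → ℕ
  | k, [] => k
  | k, y :: ys => if y = k+1 then aCA (k+1) ys else k

lemma aCA_nil (k : ℕ) : aCA k [] = k := rfl
lemma aCA_cons (k y : ℕ) (ys : List ℕ) :
    aCA k (y :: ys) = if y = k+1 then aCA (k+1) ys else k := rfl

lemma le_aCA (k : ℕ) (C : List ℕ) : k ≤ aCA k C := by
  induction C generalizing k with
  | nil => simp [aCA]
  | cons y ys ih =>
    rw [aCA_cons]; split
    · exact le_trans (Nat.le_succ k) (ih (k+1))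
    · exact le_rfl

lemma aCA_le (k : ℕ) (C : List ℕ) : aCA k C ≤ k + C.length := by
  induction C generalizing k with
  | nil => simp [aCA]
  | cons y ys ih =>
    rw [aCA_cons]; split
    · have := ih (k+1); simp only [List.length_cons]; omega
    · simp

lemma aCA_singleton (k x : ℕ) : aCA k [x] = if x = k+1 then k+1 else k := by
  simp [aCA]



lemma c0 (x : ℕ) (C : List ℕ) : ∀ z ∈ (colInsertCol x C).1, z ∈ C ∨ z = x := by
  induction C with
  | nil => simp [colInsertCol]
  | cons y ys ih =>
    intro z hz
    rw [colInsertCol] at hz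
    split at hz
    · rcases List.mem_cons.1 hz with h | h
      · right; exact h
      · left; exact List.mem_cons_of_mem _ h
    · rcases List.mem_cons.1 hz with h | h
      · left; exact h ▸ List.mem_cons_self
      · rcases ih z h with h' | h'
        · left; exact List.mem_cons_of_mem _ h'
        · right; exact h'

lemma c3 (x : ℕ) (C : List ℕ) (y : ℕ) (h : (colInsertCol x C).2 = some y) :
    x ≤ y ∧ y ∈ C ∧ (colInsertCol x C).1.length = C.length := by
  induction C with
  | nil => simp [colInsertCol] at h
  | cons c cs ih =>
    rw [colInsertCol] at h ⊢
    by_cases hxc : x ≤ c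
    · rw [if_pos hxc] at h ⊢
      simp only [Option.some.injEq] at h
      subst h
      exact ⟨hxc, List.mem_cons_self, by simp⟩
    · rw [if_neg hxc] at h ⊢
      obtain ⟨h1, h2, h3⟩ := ih h
      exact ⟨h1, List.mem_cons_of_mem _ h2, by simpa using h3⟩

lemma c3' (x : ℕ) (C : List ℕ) (h : ∀ z ∈ C, z < x) :
    colInsertCol x C = (C ++ [x], none) := by
  induction C with
  | nil => simp [colInsertCol]
  | cons c cs ih =>
    rw [colInsertCol]
    have hnx : ¬ x ≤ c := by have := h c (List.mem_cons_self); omega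
    rw [if_neg hnx, ih (fun z hz => h z (List.mem_cons_of_mem _ hz))]
    rfl

lemma c3'_rev (x : ℕ) (C : List ℕ) (h : (colInsertCol x C).2 = none) :
    (colInsertCol x C).1 = C ++ [x] := by
  induction C with
  | nil => simp [colInsertCol]
  | cons c cs ih =>
    rw [colInsertCol] at h ⊢
    by_cases hxc : x ≤ c
    · rw [if_pos hxc] at h; simp at h
    · rw [if_neg hxc] at h ⊢
      simp only at h ⊢
      rw [ih h]
      rfl

lemma c1 (k x : ℕ) (C : List ℕ) (hP : C.Pairwise (· < ·)) (hbd : ∀ z ∈ C, k < z)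
    (hx : k < x) (hle : x ≤ aCA k C) : colInsertCol x C = (C, some x) := by
  induction C generalizing k with
  | nil => rw [aCA_nil] at hle; omega
  | cons y ys ih =>
    rw [aCA_cons] at hle
    by_cases hy' : y = k + 1
    · rw [if_pos hy'] at hle
      by_cases hxy : x ≤ y
      · have hxe : x = y := by have := hbd y (List.mem_cons_self); omega
        rw [colInsertCol, if_pos hxy, hxe]
      · rw [colInsertCol, if_neg hxy]
        have hbd' : ∀ z ∈ ys, k+1 < z := by
          intro z hz
          have := (List.pairwise_cons.1 hP).1 z hz
          omega
        rw [ih (k+1) hP.of_cons hbd' (by omega) hle]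
    · rw [if_neg hy'] at hle; omega

/-- sharp aCA behaviour of insertion when `x > aCA k C`. -/
lemma c4 (k x : ℕ) (C : List ℕ) (hP : C.Pairwise (· < ·)) (hbd : ∀ z ∈ C, k < z)
    (hx : k < x) (hgt : aCA k C < x) :
    aCA k (colInsertCol x C).1 = aCA k C ∨
      (x = aCA k C + 1 ∧ aCA k (colInsertCol x C).1 = x) := by
  induction C generalizing k with
  | nil =>
    rw [show colInsertCol x [] = ([x], none) from rfl]
    rw [aCA_nil] at *
    simp only [aCA_singleton]
    split
    · right; constructor <;> omega
    · left; rfl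
  | cons y ys ih =>
    have hy := hbd y (List.mem_cons_self)
    have hbd' : ∀ z ∈ ys, k+1 < z := by
      intro z hz
      have h1 := (List.pairwise_cons.1 hP).1 z hz
      omega
    have e1 := aCA_cons k y ys
    rw [colInsertCol]
    by_cases hxy : x ≤ y
    · rw [if_pos hxy]
      simp only
      have e2 := aCA_cons k x ys
      by_cases hyk : y = k+1
      · rw [e1, if_pos hyk] at hgt
        have hxe : x = y := by omega
        subst hxe
        left; rfl
      · rw [e1, if_neg hyk] at hgt
        by_cases hxk : x = k+1
        · right
          have hys : aCA (k+1) ys = k+1 := by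
            cases ys with
            | nil => rfl
            | cons a as =>
              rw [aCA_cons, if_neg ?_]
              have h1 := (List.pairwise_cons.1 hP).1 a (List.mem_cons_self)
              omega
          rw [e1, if_neg hyk, e2, if_pos hxk, hys, hxk]
          exact ⟨rfl, rfl⟩
        · left
          rw [e1, if_neg hyk, e2, if_neg hxk]
    · rw [if_neg hxy]
      simp only
      have e3 := aCA_cons k y (colInsertCol x ys).1
      by_cases hyk : y = k+1
      · rw [e1, if_pos hyk] at hgt ⊢
        rw [e3, if_pos hyk]
        exact ih (k+1) hP.of_cons hbd' (by omega) hgt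
      · rw [e1, if_neg hyk, e3, if_neg hyk]
        left; rfl


lemma c2 (k x : ℕ) (C : List ℕ) (hP : C.Pairwise (· < ·)) (hbd : ∀ z ∈ C, k < z)
    (hx : k < x) :
    (colInsertCol x C).1.Pairwise (· < ·) ∧ ∀ z ∈ (colInsertCol x C).1, k < z := by
  induction C generalizing k with
  | nil =>
    rw [show colInsertCol x [] = ([x], none) from rfl]
    constructor
    · simp
    · intro z hz; simp at hz; omega
  | cons y ys ih =>
    have hy := hbd y (List.mem_cons_self)
    have hbd' : ∀ z ∈ ys, k+1 < z := by
      intro z hz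
      have h1 := (List.pairwise_cons.1 hP).1 z hz
      omega
    rw [colInsertCol]
    by_cases hxy : x ≤ y
    · rw [if_pos hxy]
      simp only
      constructor
      · rw [List.pairwise_cons]
        refine ⟨fun z hz => ?_, hP.of_cons⟩
        have := (List.pairwise_cons.1 hP).1 z hz
        omega
      · intro z hz
        rcases List.mem_cons.1 hz with h | h
        · omega
        · have := hbd' z h; omega
    · rw [if_neg hxy]
      simp only
      obtain ⟨ihP, ihbd⟩ := ih (k+1) hP.of_cons hbd' (by omega)
      constructor
      · rw [List.pairwise_cons]
        refine ⟨fun z hz => ?_, ihP⟩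
        rcases c0 x ys z hz with h | h
        · exact (List.pairwise_cons.1 hP).1 z h
        · omega
      · intro z hz
        rcases List.mem_cons.1 hz with h | h
        · omega
        · have := ihbd z h; omega

lemma aCA_range' (t k : ℕ) : aCA k (List.range' (k+1) t) = k + t := by
  induction t generalizing k with
  | zero => simp [aCA]
  | succ n ih =>
    rw [List.range'_succ, aCA_cons, if_pos rfl]
    have := ih (k+1); omega

lemma full_eq_range' (k : ℕ) (C : List ℕ) (h : aCA k C = k + C.length) :
    C = List.range' (k+1) C.length := by
  induction C generalizing k with
  | nil => simp
  | cons y ys ih =>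
    rw [aCA_cons] at h
    by_cases hyk : y = k+1
    · rw [if_pos hyk] at h
      have : ys = List.range' (k+2) ys.length := by
        apply ih (k+1); simp only [List.length_cons] at h; omega
      rw [List.length_cons, List.range'_succ, hyk]
      exact congrArg _ this
    · rw [if_neg hyk] at h; simp at h

lemma a8 (k : ℕ) (C : List ℕ) (hP : C.Pairwise (· < ·)) (hbd : ∀ z ∈ C, k < z) :
    aCA k C + 1 ∉ C := by
  induction C generalizing k with
  | nil => simp
  | cons y ys ih =>
    have hy := hbd y (List.mem_cons_self)
    have hbd' : ∀ z ∈ ys, k+1 < z := by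
      intro z hz
      have h1 := (List.pairwise_cons.1 hP).1 z hz
      omega
    rw [aCA_cons]
    by_cases hyk : y = k+1
    · rw [if_pos hyk]
      intro hmem
      rcases List.mem_cons.1 hmem with h | h
      · have := le_aCA (k+1) ys; omega
      · exact ih (k+1) hP.of_cons hbd' h
    · rw [if_neg hyk]
      intro hmem
      rcases List.mem_cons.1 hmem with h | h
      · omega
      · have := hbd' _ h; omega

/-- If `x ≥ aCA k C + 2`, insertion leaves `aCA` unchanged and creates a defect. -/
lemma c6 (k x : ℕ) (C : List ℕ) (hP : C.Pairwise (· < ·)) (hbd : ∀ z ∈ C, k < z)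
    (hx : k < x) (hgt : aCA k C + 2 ≤ x) :
    aCA k (colInsertCol x C).1 = aCA k C ∧ aCA k C < k + (colInsertCol x C).1.length := by
  have h4 := c4 k x C hP hbd hx (by omega)
  have ha : aCA k (colInsertCol x C).1 = aCA k C := by
    rcases h4 with h | ⟨h1, _⟩
    · exact h
    · omega
  refine ⟨ha, ?_⟩
  cases hsnd : (colInsertCol x C).2 with
  | none =>
    have := c3'_rev x C hsnd
    have hl := aCA_le k C
    rw [this]
    simp only [List.length_append, List.length_cons, List.length_nil]
    omega
  | some y =>
    obtain ⟨h1, h2, h3⟩ := c3 x C y hsnd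
    rw [h3]
    -- if aCA k C = k + C.length then C is a full segment, all entries ≤ k + len < x ≤ y, contra y ∈ C
    by_contra hcon
    push_neg at hcon
    have hle := aCA_le k C
    have heq : aCA k C = k + C.length := by omega
    have := full_eq_range' k C heq
    rw [this] at h2
    rw [List.mem_range'_1] at h2
    omega

/-- repair interface -/
lemma c7 (k x : ℕ) (C : List ℕ) (hP : C.Pairwise (· < ·)) (hbd : ∀ z ∈ C, k < z)
    (hx : k < x) (hdef : aCA k C < k + C.length) :
    aCA k (colInsertCol x C).1 < k + (colInsertCol x C).1.length ∨
      ∃ y, (colInsertCol x C).2 = some y ∧ aCA k C + 2 ≤ y := by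
  by_cases hle : x ≤ aCA k C
  · rw [c1 k x C hP hbd hx hle]
    left; exact hdef
  · push_neg at hle
    rcases c4 k x C hP hbd hx hle with h | ⟨h1, h2⟩
    · left
      cases hsnd : (colInsertCol x C).2 with
      | none =>
        rw [c3'_rev x C hsnd] at h ⊢
        simp only [List.length_append, List.length_cons, List.length_nil]
        omega
      | some y =>
        obtain ⟨_, _, h3⟩ := c3 x C y hsnd
        rw [h, h3]; exact hdef
    · -- x = aCA k C + 1, new aCA = x
      cases hsnd : (colInsertCol x C).2 with
      | none =>
        left
        rw [c3'_rev x C hsnd] at h2 ⊢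
        simp only [List.length_append, List.length_cons, List.length_nil]
        omega
      | some y =>
        obtain ⟨hy1, hy2, h3⟩ := c3 x C y hsnd
        by_cases hfin : aCA k C + 1 < k + C.length
        · left; rw [h2, h3]; omega
        · right
          refine ⟨y, rfl, ?_⟩
          -- y ≥ x = aCA+1 and y ≠ aCA+1 (a8)
          have := a8 k C hP hbd
          have : y ≠ aCA k C + 1 := fun he => this (he ▸ hy2)
          omega

/-- aCA is monotone under insertion -/
lemma c5 (k x : ℕ) (C : List ℕ) (hP : C.Pairwise (· < ·)) (hbd : ∀ z ∈ C, k < z)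
    (hx : k < x) : aCA k C ≤ aCA k (colInsertCol x C).1 := by
  by_cases hle : x ≤ aCA k C
  · rw [c1 k x C hP hbd hx hle]
  · push_neg at hle
    rcases c4 k x C hP hbd hx hle with h | ⟨h1, h2⟩ <;> omega


lemma colInsert_nil (x : ℕ) : colInsert x [] = [[x]] := rfl

lemma colInsert_cons_none {x : ℕ} {C : List ℕ} (rest : List (List ℕ))
    (h : (colInsertCol x C).2 = none) :
    colInsert x (C :: rest) = (colInsertCol x C).1 :: rest := by
  have he : colInsertCol x C = ((colInsertCol x C).1, none) := by
    rw [← h]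
  rw [colInsert, he]

lemma colInsert_cons_some {x y : ℕ} {C : List ℕ} (rest : List (List ℕ))
    (h : (colInsertCol x C).2 = some y) :
    colInsert x (C :: rest) = (colInsertCol x C).1 :: colInsert y rest := by
  have he : colInsertCol x C = ((colInsertCol x C).1, some y) := by
    rw [← h]
  rw [colInsert, he]

def OKc (C : List ℕ) : Prop := C.Pairwise (· < ·) ∧ ∀ z ∈ C, 0 < z

lemma M0 (x : ℕ) (T : List (List ℕ)) (hT : ∀ C ∈ T, OKc C) (hx : 0 < x) :
    ∀ C ∈ colInsert x T, OKc C := by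
  induction T generalizing x with
  | nil =>
    intro C hC
    rw [colInsert_nil] at hC
    simp at hC
    subst hC
    exact ⟨by simp, by intro z hz; simp at hz; omega⟩
  | cons C rest ih =>
    obtain ⟨hP, hbd⟩ := hT C (List.mem_cons_self)
    have hOK' : OKc (colInsertCol x C).1 := by
      obtain ⟨h1, h2⟩ := c2 0 x C hP hbd hx
      exact ⟨h1, h2⟩
    cases hsnd : (colInsertCol x C).2 with
    | none =>
      rw [colInsert_cons_none rest hsnd]
      intro D hD
      rcases List.mem_cons.1 hD with h | h
      · exact h ▸ hOK'
      · exact hT D (List.mem_cons_of_mem _ h)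
    | some y =>
      rw [colInsert_cons_some rest hsnd]
      intro D hD
      have hy : 0 < y := by
        obtain ⟨h1, _, _⟩ := c3 x C y hsnd
        omega
      rcases List.mem_cons.1 hD with h | h
      · exact h ▸ hOK'
      · exact ih y (fun E hE => hT E (List.mem_cons_of_mem _ hE)) hy D h


lemma headD_le_of_chain' {a : ℕ} {L : List ℕ} (h : List.Chain' (· ≥ ·) (a :: L)) :
    (L.headD 0) ≤ a := by
  cases L with
  | nil => simp
  | cons b l =>
    have := (List.isChain_cons_cons.1 h).1
    simpa using this

lemma mem_head?_eq_headD {b : ℕ} {L : List ℕ} (h : b ∈ L.head?) : b = L.headD 0 := by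
  cases L with
  | nil => simp at h
  | cons u l => simp at h; simp [h]

lemma M1 (x : ℕ) (T : List (List ℕ)) (hT : ∀ C ∈ T, OKc C)
    (hmono : List.Chain' (· ≥ ·) (T.map (aCA 0))) (hx : 0 < x) :
    List.Chain' (· ≥ ·) ((colInsert x T).map (aCA 0)) ∧
    (((colInsert x T).map (aCA 0)).headD 0 ≤ (T.map (aCA 0)).headD 0 ∨
      (x = (T.map (aCA 0)).headD 0 + 1 ∧ ((colInsert x T).map (aCA 0)).headD 0 = x)) := by
  induction T generalizing x with
  | nil =>
    rw [colInsert_nil]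
    simp only [List.map_cons, List.map_nil, List.Chain', List.isChain_singleton, true_and,
      List.headD_cons, List.headD_nil]
    rw [aCA_singleton]
    split
    · right; omega
    · left; omega
  | cons C rest ih =>
    obtain ⟨hP, hbd⟩ := hT C (List.mem_cons_self)
    have hrestOK : ∀ D ∈ rest, OKc D := fun D hD => hT D (List.mem_cons_of_mem _ hD)
    have hmono' : List.Chain' (· ≥ ·) (rest.map (aCA 0)) := by
      simp only [List.map_cons] at hmono
      exact List.IsChain.tail hmono
    have hdlea : (rest.map (aCA 0)).headD 0 ≤ aCA 0 C := by
      simp only [List.map_cons] at hmono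
      exact headD_le_of_chain' hmono
    by_cases hle : x ≤ aCA 0 C
    · have hc := c1 0 x C hP hbd hx hle
      have hsnd : (colInsertCol x C).2 = some x := by rw [hc]
      have hfst : (colInsertCol x C).1 = C := by rw [hc]
      rw [colInsert_cons_some rest hsnd, hfst]
      obtain ⟨ih1, ih2⟩ := ih x hrestOK hmono' hx
      constructor
      · simp only [List.map_cons]
        show List.IsChain _ _; rw [List.isChain_cons]
        refine ⟨?_, ih1⟩
        intro b hb
        have hb' := mem_head?_eq_headD hb
        rcases ih2 with h | ⟨h1, h2⟩ <;> omega
      · left; simp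
    · push_neg at hle
      cases hsnd : (colInsertCol x C).2 with
      | none =>
        rw [colInsert_cons_none rest hsnd]
        have h5 := c5 0 x C hP hbd hx
        constructor
        · simp only [List.map_cons]
          show List.IsChain _ _; rw [List.isChain_cons]
          refine ⟨?_, hmono'⟩
          intro b hb
          have hb' := mem_head?_eq_headD hb
          omega
        · rcases c4 0 x C hP hbd hx hle with h | ⟨h1, h2⟩
          · left; simp only [List.map_cons, List.headD_cons]; omega
          · right; simp only [List.map_cons, List.headD_cons]; omega
      | some y =>
        obtain ⟨hy1, hy2, hy3⟩ := c3 x C y hsnd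
        have hy4 : y ≠ aCA 0 C + 1 := fun he => (a8 0 C hP hbd) (he ▸ hy2)
        have hy0 : 0 < y := by omega
        rw [colInsert_cons_some rest hsnd]
        obtain ⟨ih1, ih2⟩ := ih y hrestOK hmono' hy0
        have h5 := c5 0 x C hP hbd hx
        constructor
        · simp only [List.map_cons]
          show List.IsChain _ _; rw [List.isChain_cons]
          refine ⟨?_, ih1⟩
          intro b hb
          have hb' := mem_head?_eq_headD hb
          rcases ih2 with h | ⟨h1, h2⟩ <;> omega
        · rcases c4 0 x C hP hbd hx hle with h | ⟨h1, h2⟩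
          · left; simp only [List.map_cons, List.headD_cons]; omega
          · right; simp only [List.map_cons, List.headD_cons]; omega

lemma M3 (x : ℕ) (T : List (List ℕ)) (hT : ∀ C ∈ T, OKc C)
    (hhead : (T.map (aCA 0)).headD 0 + 2 ≤ x) :
    ∃ C ∈ colInsert x T, aCA 0 C < C.length := by
  have hx : 0 < x := by omega
  cases T with
  | nil =>
    rw [colInsert_nil]
    refine ⟨[x], List.mem_cons_self, ?_⟩
    rw [aCA_singleton]
    simp only [List.map_nil, List.headD_nil] at hhead
    rw [if_neg (by omega)]
    simp
  | cons C rest =>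
    obtain ⟨hP, hbd⟩ := hT C (List.mem_cons_self)
    simp only [List.map_cons, List.headD_cons] at hhead
    obtain ⟨h1, h2⟩ := c6 0 x C hP hbd hx hhead
    cases hsnd : (colInsertCol x C).2 with
    | none =>
      rw [colInsert_cons_none rest hsnd]
      exact ⟨_, List.mem_cons_self, by omega⟩
    | some y =>
      rw [colInsert_cons_some rest hsnd]
      exact ⟨_, List.mem_cons_self, by omega⟩

lemma M2 (x : ℕ) (T : List (List ℕ)) (hT : ∀ C ∈ T, OKc C)
    (hmono : List.Chain' (· ≥ ·) (T.map (aCA 0))) (hx : 0 < x)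
    (hdef : ∃ C ∈ T, aCA 0 C < C.length) :
    ∃ C ∈ colInsert x T, aCA 0 C < C.length := by
  induction T generalizing x with
  | nil => simp at hdef
  | cons C rest ih =>
    obtain ⟨hP, hbd⟩ := hT C (List.mem_cons_self)
    have hrestOK : ∀ D ∈ rest, OKc D := fun D hD => hT D (List.mem_cons_of_mem _ hD)
    have hmono' : List.Chain' (· ≥ ·) (rest.map (aCA 0)) := by
      simp only [List.map_cons] at hmono
      exact List.IsChain.tail hmono
    have hdlea : (rest.map (aCA 0)).headD 0 ≤ aCA 0 C := by
      simp only [List.map_cons] at hmono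
      exact headD_le_of_chain' hmono
    obtain ⟨D, hD, hDdef⟩ := hdef
    rcases List.mem_cons.1 hD with hDC | hDrest
    · subst hDC
      rcases c7 0 x D hP hbd hx (by omega) with h | ⟨y, hsnd, hy⟩
      · cases hsnd : (colInsertCol x D).2 with
        | none =>
          rw [colInsert_cons_none rest hsnd]
          exact ⟨_, List.mem_cons_self, by omega⟩
        | some y =>
          rw [colInsert_cons_some rest hsnd]
          exact ⟨_, List.mem_cons_self, by omega⟩
      · rw [colInsert_cons_some rest hsnd]
        obtain ⟨E, hE, hEdef⟩ := M3 y rest hrestOK (by omega)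
        exact ⟨E, List.mem_cons_of_mem _ hE, hEdef⟩
    · cases hsnd : (colInsertCol x C).2 with
      | none =>
        rw [colInsert_cons_none rest hsnd]
        exact ⟨D, List.mem_cons_of_mem _ hDrest, hDdef⟩
      | some y =>
        obtain ⟨hy1, hy2, _⟩ := c3 x C y hsnd
        rw [colInsert_cons_some rest hsnd]
        obtain ⟨E, hE, hEdef⟩ := ih y hrestOK hmono' (by omega) ⟨D, hDrest, hDdef⟩
        exact ⟨E, List.mem_cons_of_mem _ hE, hEdef⟩

def cntGe (T : List (List ℕ)) (u : ℕ) : ℕ := T.countP (fun C => decide (u ≤ C.length))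

lemma M4 (x u : ℕ) (T : List (List ℕ)) : cntGe T u ≤ cntGe (colInsert x T) u := by
  induction T generalizing x with
  | nil => simp [cntGe]
  | cons C rest ih =>
    cases hsnd : (colInsertCol x C).2 with
    | none =>
      rw [colInsert_cons_none rest hsnd]
      have hlen : (colInsertCol x C).1.length = C.length + 1 := by
        rw [c3'_rev x C hsnd]; simp
      unfold cntGe
      rw [List.countP_cons, List.countP_cons]
      have : (decide (u ≤ C.length) : Bool) = true → (decide (u ≤ (colInsertCol x C).1.length) : Bool) = true := by
        simp only [decide_eq_true_eq]; omega
      by_cases hc : u ≤ C.length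
      · simp only [hlen, decide_eq_true_eq]
        rw [if_pos hc, if_pos (by omega)]
      · rw [if_neg (by simpa using hc)]
        split <;> omega
    | some y =>
      obtain ⟨_, _, hlen⟩ := c3 x C y hsnd
      rw [colInsert_cons_some rest hsnd]
      unfold cntGe at *
      rw [List.countP_cons, List.countP_cons, hlen]
      have := ih y
      split <;> omega

lemma range'_pairwise (s n : ℕ) : (List.range' s n).Pairwise (· < ·) := by
  induction n generalizing s with
  | zero => simp
  | succ m ih =>
    rw [List.range'_succ, List.pairwise_cons]
    refine ⟨fun z hz => ?_, ih (s+1)⟩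
    rw [List.mem_range'_1] at hz
    omega

lemma aCA_range'_append (t k : ℕ) (rest : List ℕ) :
    aCA k (List.range' (k+1) t ++ rest) = aCA (k+t) rest := by
  induction t generalizing k with
  | zero => simp
  | succ m ih =>
    rw [List.range'_succ, List.cons_append, aCA_cons, if_pos rfl]
    have := ih (k+1)
    rw [this]
    congr 1
    omega

lemma M5 (x : ℕ) (T : List (List ℕ)) (hfull : ∀ C ∈ T, aCA 0 C = C.length)
    (hfull' : ∀ C ∈ colInsert x T, aCA 0 C = C.length) (hx : 0 < x) :
    cntGe (colInsert x T) x = cntGe T x + 1 := by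
  induction T generalizing x with
  | nil =>
    rw [colInsert_nil]
    have h1 := hfull' [x] (by rw [colInsert_nil]; exact List.mem_cons_self)
    rw [aCA_singleton] at h1
    simp only [List.length_cons, List.length_nil] at h1
    have hx1 : x = 1 := by split at h1 <;> omega
    subst hx1
    simp [cntGe]
  | cons C rest ih =>
    have hC := hfull C (List.mem_cons_self)
    have hCr : C = List.range' 1 C.length := by
      have := full_eq_range' 0 C (by omega)
      simpa using this
    have hP : C.Pairwise (· < ·) := by rw [hCr]; exact range'_pairwise _ _
    have hbd : ∀ z ∈ C, 0 < z := by
      intro z hz; rw [hCr, List.mem_range'_1] at hz; omega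
    by_cases hle : x ≤ C.length
    · have hc := c1 0 x C hP hbd hx (by omega)
      have hsnd : (colInsertCol x C).2 = some x := by rw [hc]
      have hfst : (colInsertCol x C).1 = C := by rw [hc]
      rw [colInsert_cons_some rest hsnd, hfst] at hfull' ⊢
      unfold cntGe
      rw [List.countP_cons, List.countP_cons]
      have ihr := ih x (fun D hD => hfull D (List.mem_cons_of_mem _ hD))
        (fun D hD => hfull' D (List.mem_cons_of_mem _ hD)) hx
      unfold cntGe at ihr
      omega
    · push_neg at hle
      have hall : ∀ z ∈ C, z < x := by
        intro z hz; rw [hCr, List.mem_range'_1] at hz; omega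
      have hc := c3' x C hall
      have hsnd : (colInsertCol x C).2 = none := by rw [hc]
      have hfst : (colInsertCol x C).1 = C ++ [x] := by rw [hc]
      rw [colInsert_cons_none rest hsnd, hfst] at hfull' ⊢
      have hhead := hfull' (C ++ [x]) (List.mem_cons_self)
      have haCA : aCA 0 (C ++ [x]) = if x = C.length + 1 then C.length + 1 else C.length := by
        conv_lhs => rw [hCr]
        have := aCA_range'_append C.length 0 [x]
        simp only [Nat.zero_add] at this
        rw [this, aCA_singleton]
      simp only [List.length_append, List.length_cons, List.length_nil] at hhead
      rw [haCA] at hhead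
      have hxlen : x = C.length + 1 := by split at hhead <;> omega
      unfold cntGe
      rw [List.countP_cons, List.countP_cons]
      simp only [List.length_append, List.length_cons, List.length_nil, decide_eq_true_eq]
      rw [if_pos (by omega), if_neg (by omega)]

lemma M6 (u u' : ℕ) (T : List (List ℕ)) (h : u' ≤ u) : cntGe T u ≤ cntGe T u' := by
  unfold cntGe
  apply List.countP_mono_left
  intro C _ hC
  simp only [decide_eq_true_eq] at *
  omega

lemma M7 (u : ℕ) (T : List (List ℕ)) : cntGe T u ≤ T.length := List.countP_le_length


lemma insertWord_nil (T : List (List ℕ)) : insertWord [] T = T := rfl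
lemma insertWord_cons (x : ℕ) (w : List ℕ) (T : List (List ℕ)) :
    insertWord (x :: w) T = insertWord w (colInsert x T) := rfl
lemma insertWord_append (w1 w2 : List ℕ) (T : List (List ℕ)) :
    insertWord (w1 ++ w2) T = insertWord w2 (insertWord w1 T) :=
  List.foldl_append

lemma W2 (w : List ℕ) (T : List (List ℕ)) (hw : ∀ z ∈ w, 0 < z)
    (hT : ∀ C ∈ T, OKc C) (hm : List.Chain' (· ≥ ·) (T.map (aCA 0))) :
    (∀ C ∈ insertWord w T, OKc C) ∧
      List.Chain' (· ≥ ·) ((insertWord w T).map (aCA 0)) := by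
  induction w generalizing T with
  | nil => exact ⟨hT, hm⟩
  | cons x xs ih =>
    rw [insertWord_cons]
    have hx : 0 < x := hw x (List.mem_cons_self)
    exact ih (colInsert x T) (fun z hz => hw z (List.mem_cons_of_mem _ hz))
      (M0 x T hT hx) (M1 x T hT hm hx).1

lemma W3 (w : List ℕ) (T : List (List ℕ)) (hw : ∀ z ∈ w, 0 < z)
    (hT : ∀ C ∈ T, OKc C) (hm : List.Chain' (· ≥ ·) (T.map (aCA 0)))
    (hdef : ∃ C ∈ T, aCA 0 C < C.length) :
    ∃ C ∈ insertWord w T, aCA 0 C < C.length := by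
  induction w generalizing T with
  | nil => exact hdef
  | cons x xs ih =>
    rw [insertWord_cons]
    have hx : 0 < x := hw x (List.mem_cons_self)
    exact ih (colInsert x T) (fun z hz => hw z (List.mem_cons_of_mem _ hz))
      (M0 x T hT hx) (M1 x T hT hm hx).1 (M2 x T hT hm hx hdef)

lemma W4 (w : List ℕ) (u : ℕ) (T : List (List ℕ)) :
    cntGe T u ≤ cntGe (insertWord w T) u := by
  induction w generalizing T with
  | nil => exact le_rfl
  | cons x xs ih =>
    rw [insertWord_cons]
    exact le_trans (M4 x u T) (ih (colInsert x T))


lemma countP_range_lt (D H : ℕ) :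
    (List.range H).countP (fun i => decide (i < D)) = min D H := by
  induction H with
  | zero => simp
  | succ m ih =>
    rw [List.range_succ, List.countP_append, ih]
    simp only [List.countP_cons, List.countP_nil]
    by_cases h : m < D
    · rw [if_pos (by simpa using h)]; omega
    · rw [if_neg (by simpa using h)]; omega

lemma sorted_getD_mono {l : List ℕ} (hs : l.Pairwise (· ≥ ·)) {c c' : ℕ}
    (hcc : c ≤ c') (hc' : c' < l.length) : l.getD c' 0 ≤ l.getD c 0 := by
  rcases Nat.eq_or_lt_of_le hcc with h | h
  · subst h; exact le_rfl
  · have hc : c < l.length := lt_trans h hc'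
    rw [List.getD_eq_getElem l 0 hc, List.getD_eq_getElem l 0 hc']
    exact List.pairwise_iff_getElem.1 hs c c' hc hc' h

lemma countP_gt_iff {l : List ℕ} (hs : l.Pairwise (· ≥ ·)) {c : ℕ} (hc : c < l.length)
    (i : ℕ) : c < l.countP (fun x => decide (i < x)) ↔ i < l.getD c 0 := by
  constructor
  · intro h
    by_contra hni
    push_neg at hni
    -- all entries from index c on are ≤ l[c] ≤ i
    have hsplit : l = l.take c ++ l.drop c := (List.take_append_drop c l).symm
    have h1 : (l.take c).countP (fun x => decide (i < x)) ≤ c := by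
      calc (l.take c).countP (fun x => decide (i < x)) ≤ (l.take c).length :=
            List.countP_le_length
        _ ≤ c := by rw [List.length_take]; omega
    have h2 : (l.drop c).countP (fun x => decide (i < x)) = 0 := by
      rw [List.countP_eq_zero]
      intro z hz
      rw [List.mem_iff_getElem] at hz
      obtain ⟨k, hk, rfl⟩ := hz
      have hdg : (l.drop c)[k] = l[c + k]'(by rw [List.length_drop] at hk; omega) := by
        rw [List.getElem_drop]
      rw [hdg]
      simp only [decide_eq_true_eq, not_lt]
      have : l[c + k]'(by rw [List.length_drop] at hk; omega) ≤ l.getD c 0 := by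
        have := sorted_getD_mono hs (c := c) (c' := c + k)
          (by omega) (by rw [List.length_drop] at hk; omega)
        rw [List.getD_eq_getElem l 0 (by rw [List.length_drop] at hk; omega)] at this
        exact this
      omega
    conv at h => rw [hsplit]
    rw [List.countP_append] at h
    omega
  · intro h
    have hsub := List.take_sublist (c+1) l
    have hlen : (l.take (c+1)).length = c + 1 := by
      rw [List.length_take]; omega
    have hall : ∀ z ∈ l.take (c+1), (fun x => decide (i < x)) z = true := by
      intro z hz
      rw [List.mem_iff_getElem] at hz
      obtain ⟨k, hk, rfl⟩ := hz
      rw [hlen] at hk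
      have hgt : (l.take (c+1))[k]'(by omega) = l[k]'(by omega) := List.getElem_take
      rw [hgt]
      have h3 : l.getD c 0 ≤ l.getD k 0 := sorted_getD_mono hs (by omega) hc
      rw [List.getD_eq_getElem l 0 (by omega : k < l.length),
        List.getD_eq_getElem l 0 hc] at h3
      simp only [decide_eq_true_eq]
      rw [List.getD_eq_getElem l 0 hc] at h
      omega
    have h2 : (l.take (c+1)).countP (fun x => decide (i < x)) = c + 1 := by
      rw [List.countP_eq_length.2 hall, hlen]
    have := hsub.countP_le (p := fun x => decide (i < x))
    omega

lemma conj_headI {l : List ℕ} (hl : l ≠ []) (hpos : ∀ x ∈ l, 0 < x) :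
    (conj l).headI = l.length := by
  have h0 : 0 < l.headI := by
    cases l with
    | nil => simp at hl
    | cons a l' => exact hpos a (List.mem_cons_self)
  unfold conj
  cases hh : l.headI with
  | zero => omega
  | succ m =>
    rw [List.range_succ_eq_map]
    simp only [List.map_cons, List.headI_cons]
    rw [List.countP_eq_length]
    intro z hz
    simpa using hpos z hz

lemma conj_length (l : List ℕ) : (conj l).length = l.headI := by simp [conj]

lemma conj_getD (l : List ℕ) {c : ℕ} (hc : c < l.headI) :
    (conj l).getD c 0 = l.countP (fun x => decide (c < x)) := by
  unfold conj
  rw [List.getD_eq_getElem _ 0 (by simpa using hc), List.getElem_map, List.getElem_range]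

lemma conjconj_getD {l : List ℕ} (hs : l.Pairwise (· ≥ ·)) (hpos : ∀ x ∈ l, 0 < x)
    {c : ℕ} (hc : c < l.length) : (conj (conj l)).getD c 0 = l.getD c 0 := by
  have hl : l ≠ [] := by intro h; subst h; simp at hc
  have hw : (conj l).headI = l.length := conj_headI hl hpos
  rw [conj_getD (conj l) (by omega)]
  unfold conj
  rw [List.countP_map]
  have hcong : ∀ i ∈ List.range l.headI,
      (((fun x => decide (c < x)) ∘ fun i => l.countP fun x => decide (i < x)) i = true ↔
        (fun i => decide (i < l.getD c 0)) i = true) := by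
    intro i _
    simp only [Function.comp_apply, decide_eq_true_eq]
    exact countP_gt_iff hs hc i
  rw [List.countP_congr hcong, countP_range_lt]
  have hle : l.getD c 0 ≤ l.headI := by
    have h1 : l.headI = l.getD 0 0 := by
      cases l with
      | nil => simp at hl
      | cons a l' => simp
    rw [h1]
    exact sorted_getD_mono hs (Nat.zero_le c) hc
  omega


lemma Hcols_length (mu : List ℕ) : (Hcols mu).length = mu.headI := by
  simp [Hcols]

lemma map_range_add_one (L : ℕ) : (List.range L).map (· + 1) = List.range' 1 L := by
  rw [List.range'_eq_map_range]
  apply List.map_congr_left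
  intro a _
  omega

lemma Hcols_full (mu : List ℕ) : ∀ C ∈ Hcols mu, aCA 0 C = C.length ∧ OKc C := by
  intro C hC
  unfold Hcols at hC
  rw [List.mem_map] at hC
  obtain ⟨c, _, rfl⟩ := hC
  set L := (conj mu).getD c 0
  rw [map_range_add_one]
  refine ⟨?_, ?_, ?_⟩
  · have := aCA_range' L 0
    simpa using this
  · exact range'_pairwise _ _
  · intro z hz
    rw [List.mem_range'_1] at hz
    omega

lemma Hcols_conj_amap {delta : List ℕ} (hs : delta.Pairwise (· ≥ ·))
    (hpos : ∀ x ∈ delta, 0 < x) (hne : delta ≠ []) :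
    (Hcols (conj delta)).map (aCA 0) =
      (List.range delta.length).map (fun c => delta.getD c 0) := by
  unfold Hcols
  rw [conj_headI hne hpos, List.map_map]
  apply List.map_congr_left
  intro c hc
  rw [List.mem_range] at hc
  simp only [Function.comp_apply]
  rw [map_range_add_one]
  have h1 := aCA_range' ((conj (conj delta)).getD c 0) 0
  simp only [Nat.zero_add] at h1
  rw [h1]
  exact conjconj_getD hs hpos hc

lemma Hcols_conj_chain {delta : List ℕ} (hs : delta.Pairwise (· ≥ ·))
    (hpos : ∀ x ∈ delta, 0 < x) (hne : delta ≠ []) :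
    List.Chain' (· ≥ ·) ((Hcols (conj delta)).map (aCA 0)) := by
  rw [Hcols_conj_amap hs hpos hne]
  apply List.Pairwise.isChain
  rw [List.pairwise_iff_getElem]
  intro i j hi hj hij
  simp only [List.getElem_map, List.getElem_range]
  simp only [List.length_map, List.length_range] at hi hj
  exact sorted_getD_mono hs (le_of_lt hij) hj

lemma Hcols_conj_cntGe {delta : List ℕ} (hs : delta.Pairwise (· ≥ ·))
    (hpos : ∀ x ∈ delta, 0 < x) (hne : delta ≠ []) {M v : ℕ}
    (hM : M ≤ delta.length) (hv : ∀ c < M, v ≤ delta.getD c 0) :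
    M ≤ cntGe (Hcols (conj delta)) v := by
  unfold cntGe Hcols
  rw [conj_headI hne hpos, List.countP_map]
  have hsub := (List.take_sublist M (List.range delta.length)).countP_le (p :=
    (fun C : List ℕ => decide (v ≤ C.length)) ∘ fun c => (List.range ((conj (conj delta)).getD c 0)).map (· + 1))
  rw [List.take_range] at hsub
  have heq := List.countP_eq_length
    (p := (fun C : List ℕ => decide (v ≤ C.length)) ∘ fun c => (List.range ((conj (conj delta)).getD c 0)).map (· + 1))
    (l := List.range (min M delta.length)) |>.2 (by
      intro c hc
      rw [List.mem_range] at hc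
      simp only [Function.comp_apply, List.length_map, List.length_range, decide_eq_true_eq]
      rw [conjconj_getD hs hpos (by omega)]
      exact hv c (by omega))
  rw [List.length_range] at heq
  rw [heq] at hsub
  omega




/-! ### drev and word structure -/

lemma drev_getD {delta : List ℕ} {n i : ℕ} (hL : delta.length ≤ n) (h1 : 1 ≤ i)
    (hin : i ≤ n) :
    (drev n delta).getD (i - 1) 0 =
      (delta ++ List.replicate (n - delta.length) 0).getD (n - i) 0 := by
  unfold drev
  have hplen : (delta ++ List.replicate (n - delta.length) 0).length = n := by
    rw [List.length_append, List.length_replicate]; omega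
  rw [List.getD_eq_getElem _ 0 (by rw [List.length_reverse, hplen]; omega),
    List.getD_eq_getElem _ 0 (by rw [hplen]; omega)]
  rw [List.getElem_reverse]
  congr 1
  rw [hplen]
  omega

lemma padded_getD_lt {delta : List ℕ} {n j : ℕ} (hj : j < delta.length) :
    (delta ++ List.replicate (n - delta.length) 0).getD j 0 = delta.getD j 0 := by
  rw [List.getD_eq_getElem _ 0 (by rw [List.length_append]; omega),
    List.getD_eq_getElem _ 0 hj, List.getElem_append_left hj]

lemma padded_getD_ge {delta : List ℕ} {n j : ℕ} (hj : delta.length ≤ j) (hjn : j < n) :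
    (delta ++ List.replicate (n - delta.length) 0).getD j 0 = 0 := by
  rw [List.getD_eq_getElem _ 0 (by rw [List.length_append, List.length_replicate]; omega)]
  rw [List.getElem_append_right hj]
  simp

lemma range_split {k m : ℕ} (h : k ≤ m) :
    List.range m = List.range k ++ List.range' k (m - k) := by
  rw [List.range_eq_range', List.range_eq_range']
  have h2 := List.range'_append (s := 0) (m := k) (n := m-k) (step := 1)
  simp only [Nat.zero_add, Nat.one_mul] at h2
  rw [show k + (m - k) = m by omega] at h2
  exact h2.symm

lemma flatten_rev_split (B : ℕ → List ℕ) {k m : ℕ} (h : k ≤ m) :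
    ((List.range m).reverse.map B).flatten =
      ((List.range' k (m - k)).reverse.map B).flatten ++
        ((List.range k).reverse.map B).flatten := by
  rw [range_split h, List.reverse_append, List.map_append, List.flatten_append]

lemma flatten_rev_step (B : ℕ → List ℕ) (k : ℕ) :
    ((List.range (k+1)).reverse.map B).flatten =
      B k ++ ((List.range k).reverse.map B).flatten := by
  rw [List.range_succ, List.reverse_append, List.map_append, List.flatten_append]
  simp

lemma range'_rev_step (B : ℕ → List ℕ) {k p : ℕ} (h1 : 1 ≤ k) (hk : k ≤ p) :
    ((List.range' (k-1) (p - (k-1))).reverse.map B).flatten =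
      ((List.range' k (p - k)).reverse.map B).flatten ++ B (k-1) := by
  have : List.range' (k-1) (p - (k-1)) = (k-1) :: List.range' k (p - k) := by
    have h2 : p - (k-1) = (p - k) + 1 := by omega
    rw [h2, List.range'_succ]
    have h3 : k - 1 + 1 = k := by omega
    rw [h3]
  rw [this, List.reverse_cons, List.map_append, List.flatten_append]
  simp


/-! ### Part 1: the key inequality -/

lemma part1 (n : ℕ) (lam mu delta : List ℕ)
    (hlam : IsPartition lam) (hlamlen : lam.length ≤ n)
    (hmu : IsPartition mu) (hposn : 2 * mu.length ≤ n)
    (hdelta : IsPartition delta) (hdlen : delta.length ≤ n)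
    (S : List (List ℕ)) (hS : IsCompanion lam delta mu S) :
    ∀ i, 1 ≤ i → i ≤ mu.length →
      (drev n delta).getD (i - 1) 0 < (S.getD 0 []).getD (i - 1) 0 := by
  intro i hi1 hip
  obtain ⟨hSS, hIns⟩ := hS
  obtain ⟨hSlen, hrowlen, hSpos, hSsort, _⟩ := hSS
  have hmune : mu ≠ [] := by
    intro h; rw [h] at hip; simp at hip; omega
  have hmuh : 0 < mu.headI := by
    cases mu with
    | nil => simp at hmune
    | cons a l => exact hmu.2 a (List.mem_cons_self)
  have hin : i ≤ n := by omega
  have hconjlen : (conj mu).length = mu.headI := conj_length mu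
  have hSlen' : S.length = mu.headI := by rw [hSlen, hconjlen]
  have hcm0 : (conj mu).getD 0 0 = mu.length := by
    rw [conj_getD mu hmuh]
    rw [List.countP_eq_length]
    intro z hz
    simpa using hmu.2 z hz
  have hrow0len : (S.getD 0 []).length = mu.length := by
    rw [hrowlen 0, hcm0]; simp
  have hrow0mem : S.getD 0 [] ∈ S := by
    rw [List.getD_eq_getElem _ _ (by omega : 0 < S.length)]
    exact List.getElem_mem _
  set sv : ℕ → ℕ := fun k => (S.getD 0 []).getD (k-1) 0 with hsv
  have hsvpos : ∀ k, 1 ≤ k → k ≤ mu.length → 0 < sv k := by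
    intro k h1 h2
    simp only [hsv]
    rw [List.getD_eq_getElem _ _ (by omega : k - 1 < (S.getD 0 []).length)]
    exact hSpos _ hrow0mem _ (List.getElem_mem _)
  have hsvmono : ∀ k, 1 ≤ k → k + 1 ≤ mu.length → sv k ≤ sv (k+1) := by
    intro k h1 h2
    simp only [hsv]
    rw [List.getD_eq_getElem _ _ (by omega : k - 1 < (S.getD 0 []).length),
      List.getD_eq_getElem _ _ (by omega : k + 1 - 1 < (S.getD 0 []).length)]
    have hpw := List.pairwise_iff_getElem.1 (hSsort _ hrow0mem)
    exact hpw (k-1) (k+1-1) (by omega) (by omega) (by omega)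
  by_contra hcon
  push_neg at hcon
  -- case: the drev entry is zero
  by_cases hcase : delta.length ≤ n - i
  · have h0 : (drev n delta).getD (i - 1) 0 = 0 := by
      rw [drev_getD hdlen hi1 hin]
      exact padded_getD_ge hcase (by omega)
    have := hsvpos i hi1 hip
    rw [h0] at hcon
    simp only [hsv] at this
    omega
  push_neg at hcase
  have hdne : delta ≠ [] := by
    intro h; rw [h] at hcase; simp at hcase
  set v := sv i with hv
  have hv1 : 1 ≤ v := hsvpos i hi1 hip
  have hDv : v ≤ delta.getD (n-i) 0 := by
    rw [drev_getD hdlen hi1 hin, padded_getD_lt hcase] at hcon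
    exact hcon
  -- setup of tableaux and word
  set T0 := Hcols (conj delta) with hT0
  set B : ℕ → List ℕ := fun c => (List.range S.length).filterMap fun r =>
    if List.getD ([] : List ℕ) r 0 ≤ c ∧ c < (conj mu).getD r 0
    then some (entry [] S r c) else none with hB
  have hcmuh : (conj mu).headI = mu.length := conj_headI hmune hmu.2
  have hword : colWord (conj mu) [] S = ((List.range mu.length).reverse.map B).flatten := by
    unfold colWord
    rw [hcmuh]
  -- positivity of letters
  have hBpos : ∀ c, ∀ z ∈ B c, 0 < z := by
    intro c z hz
    simp only [hB] at hz
    rw [List.mem_filterMap] at hz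
    obtain ⟨r, hr, hif⟩ := hz
    rw [List.mem_range] at hr
    split at hif
    · rename_i hcond
      simp only [Option.some.injEq] at hif
      subst hif
      unfold entry
      have hrowr : (S.getD r []).length = (conj mu).getD r 0 := by
        rw [hrowlen r]; simp
      have hc : c - List.getD ([] : List ℕ) r 0 < (S.getD r []).length := by
        simp only [List.getD_nil] at hcond ⊢
        omega
      rw [List.getD_eq_getElem _ _ hc]
      have hrmem : S.getD r [] ∈ S := by
        rw [List.getD_eq_getElem _ _ hr]
        exact List.getElem_mem _
      exact hSpos _ hrmem _ (List.getElem_mem _)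
    · simp at hif
  have hflatpos : ∀ cs : List ℕ, ∀ z ∈ (cs.map B).flatten, 0 < z := by
    intro cs z hz
    rw [List.mem_flatten] at hz
    obtain ⟨l, hl, hzl⟩ := hz
    rw [List.mem_map] at hl
    obtain ⟨c, _, rfl⟩ := hl
    exact hBpos c z hzl
  have hwordpos : ∀ z ∈ ((List.range mu.length).reverse.map B).flatten, 0 < z :=
    hflatpos _
  -- all prefixes are superstandard
  have hT0OK : ∀ C ∈ T0, OKc C := fun C hC => (Hcols_full _ C hC).2
  have hT0full : ∀ C ∈ T0, aCA 0 C = C.length := fun C hC => (Hcols_full _ C hC).1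
  have hT0chain : List.Chain' (· ≥ ·) (T0.map (aCA 0)) :=
    Hcols_conj_chain hdelta.1 hdelta.2 hdne
  have hFullPrefix : ∀ u rest : List ℕ,
      ((List.range mu.length).reverse.map B).flatten = u ++ rest →
      ∀ C ∈ insertWord u T0, aCA 0 C = C.length := by
    intro u rest hsplit C hC
    have hupos : ∀ z ∈ u, 0 < z := by
      intro z hz
      exact hwordpos z (by rw [hsplit]; exact List.mem_append_left _ hz)
    have hrestpos : ∀ z ∈ rest, 0 < z := by
      intro z hz
      exact hwordpos z (by rw [hsplit]; exact List.mem_append_right _ hz)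
    obtain ⟨hOKs, hchains⟩ := W2 u T0 hupos hT0OK hT0chain
    by_contra hne
    have hCle : aCA 0 C ≤ C.length := by
      have := aCA_le 0 C; omega
    have hdef : ∃ D ∈ insertWord u T0, aCA 0 D < D.length :=
      ⟨C, hC, lt_of_le_of_ne hCle hne⟩
    have hfin := W3 rest _ hrestpos hOKs hchains hdef
    rw [← insertWord_append, ← hsplit, ← hword, hIns] at hfin
    obtain ⟨C', hC', hC'def⟩ := hfin
    have := (Hcols_full (conj lam) C' hC').1
    omega
  -- the states U m
  set U : ℕ → List (List ℕ) := fun m =>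
    insertWord (((List.range' m (mu.length - m)).reverse.map B).flatten) T0 with hU
  have hUsplit : ∀ m, m ≤ mu.length →
      ((List.range mu.length).reverse.map B).flatten =
        (((List.range' m (mu.length - m)).reverse.map B).flatten) ++
          ((List.range m).reverse.map B).flatten :=
    fun m hm => flatten_rev_split B hm
  -- head structure of blocks
  have hBhead : ∀ c, c < mu.length → ∃ t, B c = sv (c+1) :: t := by
    intro c hc
    cases hm : S.length with
    | zero => omega
    | succ m =>
      simp only [hB, hm]
      rw [List.range_succ_eq_map, List.filterMap_cons]
      have hcond : List.getD ([] : List ℕ) 0 0 ≤ c ∧ c < (conj mu).getD 0 0 := by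
        simp only [List.getD_nil, hcm0]
        omega
      have hent : entry [] S 0 c = sv (c+1) := by
        unfold entry
        simp only [hsv, List.getD_nil, Nat.sub_zero, Nat.add_sub_cancel]
      rw [if_pos hcond, hent]
      exact ⟨_, rfl⟩
  -- the step inequality
  have hstep : ∀ k, 1 ≤ k → k ≤ mu.length →
      cntGe (U k) (sv k) + 1 ≤ cntGe (U (k-1)) (sv k) := by
    intro k h1 h2
    obtain ⟨t, hBk⟩ := hBhead (k-1) (by omega)
    rw [show k - 1 + 1 = k from by omega] at hBk
    have hUstepk : U (k-1) = insertWord (B (k-1)) (U k) := by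
      simp only [hU]
      rw [range'_rev_step B h1 h2, insertWord_append]
    rw [hUstepk, hBk, insertWord_cons]
    have hfullUk : ∀ C ∈ U k, aCA 0 C = C.length := by
      simp only [hU]
      exact hFullPrefix _ _ (hUsplit k (by omega))
    have hw2 : ((List.range mu.length).reverse.map B).flatten =
        ((((List.range' k (mu.length - k)).reverse.map B).flatten) ++ [sv k]) ++
          (t ++ ((List.range (k-1)).reverse.map B).flatten) := by
      rw [hUsplit k (by omega)]
      have hstep2 := flatten_rev_step B (k-1)
      rw [show k - 1 + 1 = k from by omega] at hstep2
      rw [hstep2, hBk]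
      simp [List.append_assoc]
    have hfullUk' : ∀ C ∈ colInsert (sv k) (U k), aCA 0 C = C.length := by
      have heq : insertWord ((((List.range' k (mu.length - k)).reverse.map B).flatten) ++ [sv k]) T0 =
          colInsert (sv k) (U k) := by
        rw [insertWord_append]
        rfl
      have := hFullPrefix _ _ hw2
      rw [heq] at this
      exact this
    have hM5 := M5 (sv k) (U k) hfullUk hfullUk' (hsvpos k h1 h2)
    calc cntGe (U k) (sv k) + 1 = cntGe (colInsert (sv k) (U k)) (sv k) := hM5.symm
      _ ≤ cntGe (insertWord t (colInsert (sv k) (U k))) (sv k) := W4 t _ _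
  -- base count
  have hbase : n + 1 - i ≤ cntGe T0 v := by
    apply Hcols_conj_cntGe hdelta.1 hdelta.2 hdne (M := n + 1 - i) (by omega)
    intro c hc
    have := sorted_getD_mono hdelta.1 (c := c) (c' := n - i) (by omega) (by omega)
    omega
  -- downward induction
  have hQ : ∀ d, d < i → n + 2 ≤ cntGe (U (i - d - 1)) (sv (i - d)) + (i - d) := by
    intro d
    induction d with
    | zero =>
      intro _
      have h2 : cntGe T0 v ≤ cntGe (U i) v := by
        simp only [hU]
        exact W4 _ _ _
      have h3 := hstep i hi1 hip
      rw [← hv] at h3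
      simp only [Nat.sub_zero]
      rw [← hv]
      omega
    | succ d ihd =>
      intro hdi
      have ih := ihd (by omega)
      have hk1 : 1 ≤ i - d - 1 := by omega
      have hkp : i - d - 1 ≤ mu.length := by omega
      have hmono : sv (i - d - 1) ≤ sv (i - d) := by
        have := hsvmono (i - d - 1) hk1 (by omega)
        rw [show i - d - 1 + 1 = i - d from by omega] at this
        exact this
      have h6 : cntGe (U (i - d - 1)) (sv (i - d)) ≤ cntGe (U (i - d - 1)) (sv (i - d - 1)) :=
        M6 _ _ _ hmono
      have h3 := hstep (i - d - 1) hk1 hkp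
      rw [show i - (d + 1) - 1 = i - d - 1 - 1 from by omega,
        show i - (d + 1) = i - d - 1 from by omega]
      omega
  have hfinal := hQ (i - 1) (by omega)
  rw [show i - (i - 1) - 1 = 0 from by omega, show i - (i - 1) = 1 from by omega] at hfinal
  have hU0 : U 0 = Hcols (conj lam) := by
    simp only [hU]
    rw [Nat.sub_zero, ← List.range_eq_range', ← hword, hIns]
  have hle := M7 (sv 1) (U 0)
  have hlamlen' : (Hcols (conj lam)).length ≤ n := by
    rw [Hcols_length]
    by_cases hlamne : lam = []
    · subst hlamne; simp [conj]
    · rw [conj_headI hlamne hlam.2]; exact hlamlen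
  rw [hU0] at hle hfinal
  omega

/-- **Remark 4.2.** Let `S` be a companion LR tableau in
`LR^{λ'}_{δ'μ'}` with first-row entries `s_1 ≤ ⋯ ≤ s_p` (`p = μ'_1`), where
`λ ∈ 𝒫_n`, `δ ∈ 𝒫^{(2)}_n` and `n - 2μ'_1 ≥ 0`.  Then `δ^{rev}_i < s_i` for
all `1 ≤ i ≤ p`; consequently the sequence `m_1 < ⋯ < m_p` of Definition 4.1
is well defined and satisfies `i ≤ m_i ≤ 2i - 1`. -/
theorem m_sequence_well_defined
    (n : ℕ) (lam mu delta : List ℕ)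
    (hlam : IsPartition lam) (hlamlen : lam.length ≤ n)
    (hmu : IsPartition mu) (hpos : 2 * mu.length ≤ n)
    (hdelta : IsPartition delta) (hdlen : delta.length ≤ n)
    (heven : ∀ x ∈ delta, 2 ∣ x)
    (S : List (List ℕ)) (hS : IsCompanion lam delta mu S) :
    (∀ i, 1 ≤ i → i ≤ mu.length →
      (drev n delta).getD (i - 1) 0 < (S.getD 0 []).getD (i - 1) 0) ∧
    (∀ i, 1 ≤ i → i ≤ mu.length →
      i ≤ mOv n mu delta S i ∧ mOv n mu delta S i ≤ 2 * i - 1) := by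
  have hpart1 := part1 n lam mu delta hlam hlamlen hmu hpos hdelta hdlen S hS
  refine ⟨hpart1, ?_⟩
  have hmc_succ : ∀ j : ℕ, mChosen n mu delta S (j+1) =
      Nat.findGreatest
        (fun k => mu.length - j ≤ k ∧ k ∉ mChosen n mu delta S j ∧
          (drev n delta).getD (k - 1) 0 < (S.getD 0 []).getD (mu.length - j - 1) 0)
        (if mu.length - j ≤ min mu.length (n - mu.length) then 2 * (mu.length - j) - 1
          else n - mu.length + (mu.length - j)) :: mChosen n mu delta S j :=
    fun j => rfl
  have hub : ∀ j : ℕ, (if mu.length - j ≤ min mu.length (n - mu.length)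
      then 2 * (mu.length - j) - 1 else n - mu.length + (mu.length - j)) =
      2 * (mu.length - j) - 1 := by
    intro j
    rw [if_pos (by omega)]
  have hinv : ∀ j, j ≤ mu.length → ∀ m ∈ mChosen n mu delta S j, mu.length - j + 1 ≤ m := by
    intro j
    induction j with
    | zero => intro _ m hm; simp [mChosen] at hm
    | succ j ih =>
      intro hj m hm
      rw [hmc_succ j, hub j] at hm
      rcases List.mem_cons.1 hm with h | h
      · subst h
        have hP : (fun k => mu.length - j ≤ k ∧ k ∉ mChosen n mu delta S j ∧
            (drev n delta).getD (k - 1) 0 < (S.getD 0 []).getD (mu.length - j - 1) 0)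
            (mu.length - j) := by
          refine ⟨le_rfl, ?_, ?_⟩
          · intro hmem
            have := ih (by omega) _ hmem
            omega
          · exact hpart1 (mu.length - j) (by omega) (by omega)
        have hle2 := Nat.le_findGreatest
          (P := fun k => mu.length - j ≤ k ∧ k ∉ mChosen n mu delta S j ∧
            (drev n delta).getD (k - 1) 0 < (S.getD 0 []).getD (mu.length - j - 1) 0)
          (by omega : mu.length - j ≤ 2 * (mu.length - j) - 1) hP
        omega
      · have := ih (by omega) _ h
        omega
  intro i hi1 hip
  have hji : mu.length + 1 - i = (mu.length - i) + 1 := by omega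
  have hmO : mOv n mu delta S i =
      Nat.findGreatest
        (fun k => mu.length - (mu.length - i) ≤ k ∧ k ∉ mChosen n mu delta S (mu.length - i) ∧
          (drev n delta).getD (k - 1) 0 <
            (S.getD 0 []).getD (mu.length - (mu.length - i) - 1) 0)
        (if mu.length - (mu.length - i) ≤ min mu.length (n - mu.length)
          then 2 * (mu.length - (mu.length - i)) - 1
          else n - mu.length + (mu.length - (mu.length - i))) := by
    unfold mOv
    rw [hji, hmc_succ (mu.length - i)]
    rfl
  rw [hmO, hub (mu.length - i), show mu.length - (mu.length - i) = i from by omega]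
  constructor
  · apply Nat.le_findGreatest (by omega)
    refine ⟨le_rfl, ?_, ?_⟩
    · intro hmem
      have := hinv (mu.length - i) (by omega) _ hmem
      omega
    · exact hpart1 i hi1 hip
  · exact Nat.findGreatest_le _

end LRPaper
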